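/- Let y = (1,b_1)(2,b_2)⋯(k,b_k) ∈ S_n be a weakly dominant involution (all b_i > k). Then the part of the Rothe diagram D(y) weakly below the diagonal decomposes as D̂(y) = D̂(g_k) ∪ E_k(r(y)), where D̂(g_k) = {(i,j) : 1 ≤ j ≤ i ≤ k} and E_k(u) = {(j+k, i) : (i,j) ∈ D(u)} is the transpose of D(r(y)) shifted down by k rows. -/

import Mathlib

/-- `y` is weakly dominant with parameter `k` (0-indexed): `y` is the product of
transpositions `(0,b_0)(1,b_1)⋯(k-1,b_{k-1})` with all `b_i ≥ k`, i.e. each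
`i < k` is mapped to a value `≥ k`, and each point `≥ k` is either fixed or
mapped into `[k]`. -/
def WeaklyDominantWith {n : ℕ} (y : Equiv.Perm (Fin n)) (k : ℕ) : Prop :=
  k ≤ n ∧ (∀ i : Fin n, i.1 < k → k ≤ (y i).1) ∧
    (∀ i : Fin n, k ≤ i.1 → (y i = i ∨ (y i).1 < k))

/-- The first `k` entries (0-indexed values) of the one-line notation of `r(y)`:
the values `y(i) − k` for `i < k`. -/
def topsList (n : ℕ) (y : Equiv.Perm (Fin n)) (k : ℕ) : List ℕ :=
  ((List.finRange n).filter (fun i => decide (i.1 < k))).map (fun i => (y i).1 - k)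

/-- The one-line notation of `r(y)` for a weakly dominant involution `y` with
parameter `k`: the values `y(i) − k` for `i < k`, followed by the remaining
values of `[n−k]` in increasing order. -/
def oneLineR (n : ℕ) (y : Equiv.Perm (Fin n)) (k : ℕ) : List ℕ :=
  topsList n y k ++ (List.range (n - k)).filter (fun m => decide (m ∉ topsList n y k))

/-- The part of the Rothe diagram of `y` weakly below the diagonal,
`D̂(y) = {(i,j) : j < y(i), i < y(j), j ≤ i}`, as a set of pairs of natural
numbers (0-indexed). -/
def DhatSet (n : ℕ) (y : Equiv.Perm (Fin n)) : Set (ℕ × ℕ) :=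
  {p | ∃ hi : p.1 < n, ∃ hj : p.2 < n,
    p.2 < (y ⟨p.1, hi⟩).1 ∧ p.1 < (y ⟨p.2, hj⟩).1 ∧ p.2 ≤ p.1}

/-- The Rothe diagram of the permutation with one-line notation `L` (0-indexed):
`(i,j)` with `j < L[i]` and the value `j` not occurring among `L[0],…,L[i]`. -/
def DListSet (L : List ℕ) : Set (ℕ × ℕ) :=
  {p | p.1 < L.length ∧ p.2 < L.getD p.1 0 ∧ ∀ i ≤ p.1, L.getD i 0 ≠ p.2}

/-- `E_k(u)`: the transpose of the diagram of `u`, shifted down by `k` rows. -/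
def EkSet (k : ℕ) (L : List ℕ) : Set (ℕ × ℕ) :=
  {p | ∃ q ∈ DListSet L, p = (q.2 + k, q.1)}


lemma filter_finRange_eq_take {n k : ℕ} :
    (List.finRange n).filter (fun i => decide (i.1 < k)) = (List.finRange n).take k := by
  conv_lhs => rw [← List.take_append_drop k (List.finRange n)]
  rw [List.filter_append, List.filter_eq_self.mpr, List.filter_eq_nil_iff.mpr, List.append_nil]
  · intro a ha
    rw [List.mem_iff_getElem] at ha
    obtain ⟨m, hm, rfl⟩ := ha
    simp [List.getElem_drop, List.getElem_finRange]
  · intro a ha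
    rw [List.mem_iff_getElem] at ha
    obtain ⟨m, hm, rfl⟩ := ha
    have hm' : m < k := by simp at hm; omega
    simp [List.getElem_take, List.getElem_finRange]
    omega

lemma topsList_length {n : ℕ} (y : Equiv.Perm (Fin n)) {k : ℕ} (hk : k ≤ n) :
    (topsList n y k).length = k := by
  simp [topsList, filter_finRange_eq_take, hk]

lemma topsList_getD {n : ℕ} (y : Equiv.Perm (Fin n)) {k a : ℕ} (hk : k ≤ n) (ha : a < k) :
    (topsList n y k).getD a 0 = (y ⟨a, lt_of_lt_of_le ha hk⟩).1 - k := by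
  have hlen : a < (topsList n y k).length := by rw [topsList_length y hk]; exact ha
  rw [List.getD_eq_getElem _ _ hlen]
  simp only [topsList, filter_finRange_eq_take]
  rw [List.getElem_map]
  congr 1
  rw [List.getElem_take, List.getElem_finRange]
  rfl

lemma mem_topsList {n : ℕ} (y : Equiv.Perm (Fin n)) {k : ℕ} (hk : k ≤ n) (m : ℕ) :
    m ∈ topsList n y k ↔ ∃ a, ∃ h : a < k, (y ⟨a, lt_of_lt_of_le h hk⟩).1 - k = m := by
  constructor
  · intro hm
    rw [List.mem_iff_getElem] at hm
    obtain ⟨a, halen, ha⟩ := hm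
    have hak : a < k := by rwa [topsList_length y hk] at halen
    refine ⟨a, hak, ?_⟩
    rw [← ha, ← List.getD_eq_getElem _ 0 halen, topsList_getD y hk hak]
  · rintro ⟨a, hak, rfl⟩
    have halen : a < (topsList n y k).length := by rw [topsList_length y hk]; exact hak
    rw [List.mem_iff_getElem]
    exact ⟨a, halen, by rw [← List.getD_eq_getElem _ 0 halen, topsList_getD y hk hak]⟩

theorem stmt17 {n : ℕ} (y : Equiv.Perm (Fin n)) (hy : y * y = 1)
    (k : ℕ) (hwd : WeaklyDominantWith y k) :
    DhatSet n y = {p : ℕ × ℕ | p.2 ≤ p.1 ∧ p.1 < k} ∪ EkSet k (oneLineR n y k) := by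
  obtain ⟨hk, h1, h2⟩ := hwd
  have hyy : ∀ x : Fin n, y (y x) = x := by
    intro x
    have := congrArg (fun e : Equiv.Perm (Fin n) => e x) hy
    simpa [Equiv.Perm.mul_apply] using this
  set T := (List.range (n - k)).filter (fun m => decide (m ∉ topsList n y k)) with hT
  have hLdef : oneLineR n y k = topsList n y k ++ T := rfl
  have hTlen : (topsList n y k).length = k := topsList_length y hk
  have hLlen : (oneLineR n y k).length = k + T.length := by
    rw [hLdef, List.length_append, hTlen]
  have hLgetD_lo : ∀ a (ha : a < k),
      (oneLineR n y k).getD a 0 = (y ⟨a, lt_of_lt_of_le ha hk⟩).1 - k := by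
    intro a ha
    have halen : a < (oneLineR n y k).length := by omega
    rw [List.getD_eq_getElem _ _ halen, List.getElem_of_eq hLdef]
    rw [List.getElem_append_left (by omega : a < (topsList n y k).length)]
    rw [← List.getD_eq_getElem _ 0, topsList_getD y hk ha]
  have hLgetD_hi : ∀ t (ht : t < T.length),
      (oneLineR n y k).getD (k + t) 0 = T[t] := by
    intro t ht
    have halen : k + t < (oneLineR n y k).length := by omega
    rw [List.getD_eq_getElem _ _ halen, List.getElem_of_eq hLdef]
    rw [List.getElem_append_right (by omega : (topsList n y k).length ≤ k + t)]
    congr 1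
    omega
  have hTsorted : ∀ s t (hs : s < T.length) (ht : t < T.length), s < t → T[s] < T[t] := by
    have hp : T.Pairwise (· < ·) :=
      (List.pairwise_lt_range (n := n - k)).sublist List.filter_sublist
    intro s t hs ht hst
    exact List.pairwise_iff_getElem.mp hp s t hs ht hst
  have hTmem : ∀ b, b ∈ T ↔ b < n - k ∧ b ∉ topsList n y k := by
    intro b; simp [hT, List.mem_filter, List.mem_range]
  -- no diagram cells in the tail
  have hnotail : ∀ a b, (a, b) ∈ DListSet (oneLineR n y k) → a < k := by
    intro a b hab
    obtain ⟨halen, hbval, hmiss⟩ := hab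
    by_contra hak
    push_neg at hak
    have htlen : a - k < T.length := by omega
    have hgv : (oneLineR n y k).getD a 0 = T[a - k] := by
      have := hLgetD_hi (a - k) htlen
      rwa [Nat.add_sub_cancel' hak] at this
    rw [hgv] at hbval
    have hvmem := (hTmem T[a - k]).mp (List.getElem_mem htlen)
    by_cases hbtops : b ∈ topsList n y k
    · obtain ⟨m, hmlen, hmb⟩ := List.getElem_of_mem hbtops
      have hmk : m < k := by omega
      refine hmiss m (by omega) ?_
      rw [hLgetD_lo m hmk, ← topsList_getD y hk hmk, List.getD_eq_getElem _ _ hmlen, hmb]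
    · have hbT : b ∈ T := (hTmem b).mpr ⟨by omega, hbtops⟩
      obtain ⟨t, htlen', htb⟩ := List.getElem_of_mem hbT
      have htlt : t < a - k := by
        by_contra hge
        push_neg at hge
        rcases Nat.lt_or_ge (a - k) t with h | h
        · have := hTsorted (a - k) t htlen htlen' h
          omega
        · have : t = a - k := by omega
          subst this
          omega
      refine hmiss (k + t) (by omega) ?_
      rw [hLgetD_hi t htlen', htb]
  ext ⟨i, j⟩
  simp only [DhatSet, EkSet, Set.mem_setOf_eq, Set.mem_union]
  constructor
  · rintro ⟨hi, hj, hjyi, hiyj, hji⟩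
    by_cases hik : i < k
    · exact Or.inl ⟨hji, hik⟩
    · push_neg at hik
      have hjk : j < k := by
        by_contra hjk
        push_neg at hjk
        rcases h2 ⟨j, hj⟩ hjk with hfix | hlo
        · rw [hfix] at hiyj; simp at hiyj; omega
        · omega
      have hyjk : k ≤ (y ⟨j, hj⟩).1 := h1 _ hjk
      refine Or.inr ⟨(j, i - k), ⟨?_, ?_, ?_⟩, ?_⟩
      · omega
      · rw [hLgetD_lo j hjk]
        have : (y ⟨j, lt_of_lt_of_le hjk hk⟩).1 = (y ⟨j, hj⟩).1 := rfl
        omega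
      · intro m hm hcon
        have hmk : m < k := by omega
        have hmn : m < n := by omega
        rw [hLgetD_lo m hmk] at hcon
        have hym : k ≤ (y ⟨m, lt_of_lt_of_le hmk hk⟩).1 := h1 _ hmk
        have hymi : (y ⟨m, lt_of_lt_of_le hmk hk⟩).1 = i := by omega
        have : y ⟨m, lt_of_lt_of_le hmk hk⟩ = ⟨i, hi⟩ := Fin.ext hymi
        have h5 : (⟨m, lt_of_lt_of_le hmk hk⟩ : Fin n) = y ⟨i, hi⟩ := by
          rw [← this, hyy]
        have : (y ⟨i, hi⟩).1 = m := by rw [← h5]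
        omega
      · simp
        omega
  · rintro (⟨hji, hik⟩ | ⟨⟨a, b⟩, hab, heq⟩)
    · have hi : i < n := lt_of_lt_of_le hik hk
      have hj : j < n := by omega
      refine ⟨hi, hj, ?_, ?_, hji⟩
      · exact lt_of_lt_of_le (lt_of_le_of_lt hji hik) (h1 ⟨i, hi⟩ hik)
      · exact lt_of_lt_of_le hik (h1 ⟨j, hj⟩ (lt_of_le_of_lt hji hik))
    · simp only [Prod.mk.injEq] at heq
      obtain ⟨rfl, rfl⟩ := heq
      have hak : j < k := hnotail j b hab
      obtain ⟨halen, hbval, hmiss⟩ := hab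
      rw [hLgetD_lo j hak] at hbval
      have han : j < n := lt_of_lt_of_le hak hk
      have hya : k ≤ (y ⟨j, lt_of_lt_of_le hak hk⟩).1 := h1 _ hak
      have hin : b + k < n := by
        have := (y ⟨j, lt_of_lt_of_le hak hk⟩).2
        omega
      refine ⟨hin, han, ?_, ?_, by omega⟩
      · by_contra hcon
        push_neg at hcon
        rcases h2 ⟨b + k, hin⟩ (Nat.le_add_left k b) with hfix | hlo
        · rw [hfix] at hcon
          have h8 : ((⟨b + k, hin⟩ : Fin n)).1 = b + k := rfl
          omega
        · set m := (y ⟨b + k, hin⟩).1 with hm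
          have hmk : m < k := hlo
          have h5 : y ⟨m, lt_of_lt_of_le hmk hk⟩ = ⟨b + k, hin⟩ := by
            have h6 : (⟨m, lt_of_lt_of_le hmk hk⟩ : Fin n) = y ⟨b + k, hin⟩ := Fin.ext rfl
            rw [h6, hyy]
          refine hmiss m hcon ?_
          rw [hLgetD_lo m hmk, h5]
          simp
      · have h7 : (y ⟨j, lt_of_lt_of_le hak hk⟩).1 = (y ⟨j, han⟩).1 := rfl
        omega
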